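/- arXiv:2204.10861 — 6 statements merged into one kernel-verified Lean document; each statement's English description precedes it below -/
import Mathlib

section
/- Let N be a G-graded near-ring and P a graded weakly prime ideal of N. If P is not a graded prime ideal of N, then P² = {0} (i.e., the product PP of P with itself is the zero ideal). -/
open Pointwise

/-- A (right) near-ring: an additive group (not necessarily abelian) with an
associative multiplication that is right distributive over addition. -/
class NearRing (N : Type*) extends AddGroup N, Semigroup N where
  right_distrib : ∀ a b c : N, (a + b) * c = a * c + b * c

/-- A (two-sided) ideal of a near-ring. -/
structure NearRingIdeal (N : Type*) [NearRing N] where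
  carrier : AddSubgroup N
  normal : carrier.Normal
  mul_mem_right : ∀ i n : N, i ∈ carrier → i * n ∈ carrier
  quasi_left : ∀ m n i : N, i ∈ carrier → m * (n + i) - m * n ∈ carrier

instance (N : Type*) [NearRing N] : SetLike (NearRingIdeal N) N where
  coe I := I.carrier
  coe_injective := by
    rintro ⟨a, _, _, _⟩ ⟨b, _, _, _⟩ h
    congr
    exact SetLike.coe_injective h

/-- A `G`-grading on a near-ring `N`: a family of additive normal subgroups
whose internal direct sum is `N`, compatible with multiplication. -/
structure NearRingGrading (G : Type*) [Monoid G] (N : Type*) [NearRing N] where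
  component : G → AddSubgroup N
  normal : ∀ σ : G, (component σ).Normal
  mul_mem : ∀ σ τ : G, ∀ x ∈ component σ, ∀ y ∈ component τ, x * y ∈ component (σ * τ)
  span_top : (⨆ σ : G, component σ) = ⊤
  independent : ∀ σ : G, component σ ⊓ (⨆ τ ∈ ({σ}ᶜ : Set G), component τ) = ⊥

variable {G : Type*} [Monoid G] {N : Type*} [NearRing N]

/-- An ideal is graded if it is generated by its homogeneous elements. -/
def NearRingGrading.IsGradedIdeal (gr : NearRingGrading G N) (I : NearRingIdeal N) : Prop :=
  I.carrier = AddSubgroup.closure ((I : Set N) ∩ ⋃ σ : G, (gr.component σ : Set N))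

/-- The product `IJ` of two ideals, as the set of products of their elements. -/
def idealProd (I J : NearRingIdeal N) : Set N := (I : Set N) * (J : Set N)

/-- A graded prime ideal of a graded near-ring. -/
def NearRingGrading.IsGradedPrime (gr : NearRingGrading G N) (P : NearRingIdeal N) : Prop :=
  gr.IsGradedIdeal P ∧ ∀ I J : NearRingIdeal N, gr.IsGradedIdeal I → gr.IsGradedIdeal J →
    idealProd I J ⊆ (P : Set N) → (I : Set N) ⊆ (P : Set N) ∨ (J : Set N) ⊆ (P : Set N)

/-- A graded weakly prime ideal of a graded near-ring. -/
def NearRingGrading.IsGradedWeaklyPrime (gr : NearRingGrading G N) (P : NearRingIdeal N) : Prop :=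
  gr.IsGradedIdeal P ∧ ∀ I J : NearRingIdeal N, gr.IsGradedIdeal I → gr.IsGradedIdeal J →
    idealProd I J ≠ {0} → idealProd I J ⊆ (P : Set N) →
      (I : Set N) ⊆ (P : Set N) ∨ (J : Set N) ⊆ (P : Set N)

/-- A graded almost prime ideal of a graded near-ring. -/
def NearRingGrading.IsGradedAlmostPrime (gr : NearRingGrading G N) (P : NearRingIdeal N) : Prop :=
  gr.IsGradedIdeal P ∧ ∀ I J : NearRingIdeal N, gr.IsGradedIdeal I → gr.IsGradedIdeal J →
    idealProd I J ⊆ (P : Set N) → ¬ idealProd I J ⊆ idealProd P P →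
      (I : Set N) ⊆ (P : Set N) ∨ (J : Set N) ⊆ (P : Set N)


section Aux

variable {G : Type*} [Monoid G] {N : Type*} [NearRing N]

lemma NearRing.zero_mul'_s0 (a : N) : (0 : N) * a = 0 := by
  have h := NearRing.right_distrib (0 : N) 0 a
  rw [add_zero] at h
  have h' : (0 : N) * a + 0 = 0 * a + 0 * a := by rw [add_zero]; exact h
  exact (add_left_cancel h').symm

/-- The sum of two ideals of a near-ring is an ideal. -/
def idealSup (I J : NearRingIdeal N) : NearRingIdeal N where
  carrier := I.carrier ⊔ J.carrier
  normal := by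
    haveI := I.normal
    haveI := J.normal
    exact AddSubgroup.sup_normal I.carrier J.carrier
  mul_mem_right := by
    haveI := J.normal
    intro i n hi
    rw [← SetLike.mem_coe, AddSubgroup.add_normal] at hi
    obtain ⟨a, ha, b, hb, rfl⟩ := hi
    rw [NearRing.right_distrib]
    exact add_mem (le_sup_left (α := AddSubgroup N) (I.mul_mem_right a n ha))
      (le_sup_right (α := AddSubgroup N) (J.mul_mem_right b n hb))
  quasi_left := by
    haveI := J.normal
    intro m n i hi
    rw [← SetLike.mem_coe, AddSubgroup.add_normal] at hi
    obtain ⟨a, ha, b, hb, rfl⟩ := hi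
    have e : m * (n + (a + b)) - m * n
        = (m * ((n + a) + b) - m * (n + a)) + (m * (n + a) - m * n) := by
      rw [sub_add_sub_cancel, add_assoc]
    rw [e]
    exact add_mem (le_sup_right (α := AddSubgroup N) (J.quasi_left m (n + a) b hb))
      (le_sup_left (α := AddSubgroup N) (I.quasi_left m n a ha))

lemma mem_idealSup {I J : NearRingIdeal N} {x : N} :
    x ∈ (idealSup I J : Set N) ↔ ∃ a ∈ (I : Set N), ∃ b ∈ (J : Set N), a + b = x := by
  haveI := J.normal
  show x ∈ (↑(I.carrier ⊔ J.carrier) : Set N) ↔ _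
  rw [AddSubgroup.add_normal]
  exact Set.mem_add

lemma le_idealSup_left (I J : NearRingIdeal N) : (I : Set N) ⊆ (idealSup I J : Set N) :=
  fun _ hx => mem_idealSup.mpr ⟨_, hx, 0, (J.carrier).zero_mem, add_zero _⟩

lemma le_idealSup_right (I J : NearRingIdeal N) : (J : Set N) ⊆ (idealSup I J : Set N) :=
  fun _ hx => mem_idealSup.mpr ⟨0, (I.carrier).zero_mem, _, hx, zero_add _⟩

lemma isGradedIdeal_sup (gr : NearRingGrading G N) {I J : NearRingIdeal N}
    (hI : gr.IsGradedIdeal I) (hJ : gr.IsGradedIdeal J) :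
    gr.IsGradedIdeal (idealSup I J) := by
  unfold NearRingGrading.IsGradedIdeal at *
  apply le_antisymm
  · show I.carrier ⊔ J.carrier ≤ _
    apply sup_le
    · rw [hI]
      exact AddSubgroup.closure_mono
        (Set.inter_subset_inter_left _ (le_idealSup_left I J))
    · rw [hJ]
      exact AddSubgroup.closure_mono
        (Set.inter_subset_inter_left _ (le_idealSup_right I J))
  · rw [AddSubgroup.closure_le]
    exact Set.inter_subset_left

end Aux

/-- If a graded weakly prime ideal `P` is not graded prime, then `P² = {0}`. -/
theorem weaklyPrime_not_prime_sq_eq_zero (gr : NearRingGrading G N) (P : NearRingIdeal N)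
    (hwp : gr.IsGradedWeaklyPrime P) (hnp : ¬ gr.IsGradedPrime P) :
    idealProd P P = {0} := by
  by_contra hne
  apply hnp
  refine ⟨hwp.1, fun I J gI gJ hIJ => ?_⟩
  set K := idealSup I P with hK
  set L := idealSup J P with hL
  have gK := isGradedIdeal_sup gr gI hwp.1
  have gL := isGradedIdeal_sup gr gJ hwp.1
  have hsubP : idealProd K L ⊆ (P : Set N) := by
    rintro x ⟨a, ha, b, hb, rfl⟩
    obtain ⟨i, hi, p, hp, rfl⟩ := mem_idealSup.mp ha
    obtain ⟨j, hj, q, hq, rfl⟩ := mem_idealSup.mp hb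
    have e : (i + p) * (j + q)
        = ((i + p) * (j + q) - (i + p) * j) + (i * j + p * j) := by
      rw [← NearRing.right_distrib]
      exact (sub_add_cancel _ _).symm
    show (i + p) * (j + q) ∈ P.carrier
    rw [e]
    exact add_mem (P.quasi_left (i + p) j q hq)
      (add_mem (hIJ (Set.mul_mem_mul hi hj)) (P.mul_mem_right p j hp))
  have hPPsub : idealProd P P ⊆ idealProd K L :=
    Set.mul_subset_mul (le_idealSup_right I P) (le_idealSup_right J P)
  have hKLne : idealProd K L ≠ {0} := by
    intro h0
    apply hne
    refine Set.Subset.antisymm (h0 ▸ hPPsub) ?_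
    rintro x rfl
    exact ⟨0, (P.carrier).zero_mem, 0, (P.carrier).zero_mem, NearRing.zero_mul'_s0 0⟩
  rcases hwp.2 K L gK gL hKLne hsubP with h | h
  · exact Or.inl fun x hx => h (le_idealSup_left I P hx)
  · exact Or.inr fun x hx => h (le_idealSup_left J P hx)
end

section
/- Let N be a G-graded near-ring and P a graded weakly prime ideal of N. If the annihilator ({0} : P) = {x ∈ N : xP = {0}} is contained in P, then P is a graded prime ideal of N. -/
open Pointwise

variable {G : Type*} [Monoid G] {N : Type*} [NearRing N]

private lemma nr_sub_add_sub {A : Type*} [AddGroup A] (a b c : A) :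
    (a - b) + (b - c) = a - c := by
  simp [sub_eq_add_neg, add_assoc]

/-- A graded weakly prime ideal whose annihilator `({0} : P)` is contained
in `P` is graded prime. -/
theorem weaklyPrime_ann_subset_imp_prime (gr : NearRingGrading G N) (P : NearRingIdeal N)
    (hwp : gr.IsGradedWeaklyPrime P)
    (hann : {x : N | ∀ p ∈ P, x * p = 0} ⊆ (P : Set N)) :
    gr.IsGradedPrime P := by
  obtain ⟨hPg, hP⟩ := hwp
  refine ⟨hPg, fun I J hI hJ hIJ => ?_⟩
  by_cases h0 : idealProd I J = {0}
  · -- degenerate case : IJ = {0}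
    have hzero : ∀ i ∈ I.carrier, ∀ j ∈ J.carrier, i * j = 0 := by
      intro i hi j hj
      have : i * j ∈ idealProd I J := Set.mul_mem_mul hi hj
      rw [h0] at this
      exact this
    haveI : P.carrier.Normal := P.normal
    -- the ideal K = J ⊔ P
    have hmem : ∀ x ∈ (J.carrier ⊔ P.carrier : AddSubgroup N),
        ∃ j ∈ J.carrier, ∃ p ∈ P.carrier, x = j + p := by
      intro x hx
      have : x ∈ ((J.carrier ⊔ P.carrier : AddSubgroup N) : Set N) := hx
      rw [AddSubgroup.add_normal] at this
      obtain ⟨j, hj, p, hp, rfl⟩ := this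
      exact ⟨j, hj, p, hp, rfl⟩
    have hmem' : ∀ j ∈ J.carrier, ∀ p ∈ P.carrier,
        j + p ∈ (J.carrier ⊔ P.carrier : AddSubgroup N) := fun j hj p hp =>
      AddSubgroup.add_mem _ (AddSubgroup.mem_sup_left hj) (AddSubgroup.mem_sup_right hp)
    set K : NearRingIdeal N :=
      { carrier := J.carrier ⊔ P.carrier
        normal := by
          constructor
          intro x hx g
          obtain ⟨j, hj, p, hp, rfl⟩ := hmem x hx
          have : g + (j + p) + -g = (g + j + -g) + (g + p + -g) := by
            simp [add_assoc]
          rw [this]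
          exact AddSubgroup.add_mem _
            (AddSubgroup.mem_sup_left (J.normal.conj_mem j hj g))
            (AddSubgroup.mem_sup_right ((‹P.carrier.Normal›).conj_mem p hp g))
        mul_mem_right := by
          intro x n hx
          obtain ⟨j, hj, p, hp, rfl⟩ := hmem x hx
          rw [NearRing.right_distrib]
          exact AddSubgroup.add_mem _
            (AddSubgroup.mem_sup_left (J.mul_mem_right j n hj))
            (AddSubgroup.mem_sup_right (P.mul_mem_right p n hp))
        quasi_left := by
          intro m n x hx
          obtain ⟨j, hj, p, hp, rfl⟩ := hmem x hx
          have h1 : m * (n + (j + p)) - m * n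
              = (m * ((n + j) + p) - m * (n + j)) + (m * (n + j) - m * n) := by
            rw [nr_sub_add_sub, add_assoc]
          rw [h1]
          exact AddSubgroup.add_mem _
            (AddSubgroup.mem_sup_right (P.quasi_left m (n + j) p hp))
            (AddSubgroup.mem_sup_left (J.quasi_left m n j hj)) }
    have hKJ : J.carrier ≤ K.carrier := le_sup_left
    have hKP : P.carrier ≤ K.carrier := le_sup_right
    -- K is graded
    have hKg : gr.IsGradedIdeal K := by
      unfold NearRingGrading.IsGradedIdeal at hJ hPg ⊢
      apply le_antisymm
      · show J.carrier ⊔ P.carrier ≤ _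
        apply sup_le
        · rw [hJ]
          exact AddSubgroup.closure_mono
            (Set.inter_subset_inter_left _ (fun x hx => hKJ hx))
        · rw [hPg]
          exact AddSubgroup.closure_mono
            (Set.inter_subset_inter_left _ (fun x hx => hKP hx))
      · rw [AddSubgroup.closure_le]
        exact Set.inter_subset_left
    -- I * K ⊆ P
    have hIK : idealProd I K ⊆ (P : Set N) := by
      rintro x ⟨i, hi, y, hy, rfl⟩
      obtain ⟨j, hj, p, hp, rfl⟩ := hmem y hy
      show i * (j + p) ∈ (P : Set N)
      have h2 : i * (j + p) - i * j ∈ P.carrier := P.quasi_left i j p hp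
      rw [hzero i hi j hj, sub_zero] at h2
      exact h2
    by_cases h0' : idealProd I K = {0}
    · -- then I annihilates P
      left
      intro i hi
      apply hann
      intro p hp
      have : i * p ∈ idealProd I K := Set.mul_mem_mul hi (hKP hp)
      rw [h0'] at this
      exact this
    · rcases hP I K hI hKg h0' hIK with h | h
      · exact Or.inl h
      · exact Or.inr (fun j hj => h (hKJ hj))
  · exact hP I J hI hJ h0 hIJ
end

section
/- Let N be a G-graded near-ring, A a totally ordered index set, and (P_a)_{a∈A} a family of graded weakly prime ideals of N that is monotone, i.e., P_a ⊆ P_b whenever a ≤ b. Then the intersection P = ⋂_{a∈A} P_a is a graded weakly prime ideal of N. -/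
open Pointwise

variable {G : Type*} [Monoid G] {N : Type*} [NearRing N]

section Aux

open Finset in
/-- Elements of distinct graded components commute additively. -/
theorem NearRingGrading.addCommute_of_ne (gr : NearRingGrading G N) {σ τ : G} (h : σ ≠ τ)
    {x y : N} (hx : x ∈ gr.component σ) (hy : y ∈ gr.component τ) : AddCommute x y := by
  have hc : x + y - x - y ∈ gr.component σ ⊓ (⨆ ρ ∈ ({σ}ᶜ : Set G), gr.component ρ) := by
    constructor
    · have h1 : y + (-x) + -y ∈ gr.component σ := (gr.normal σ).conj_mem _ (neg_mem hx) y
      have he : x + y - x - y = x + (y + -x + -y) := by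
        simp [sub_eq_add_neg, add_assoc]
      rw [he]; exact add_mem hx h1
    · have hτ : gr.component τ ≤ ⨆ ρ ∈ ({σ}ᶜ : Set G), gr.component ρ :=
        le_iSup₂ (f := fun ρ _ => gr.component ρ) τ (by simpa using h.symm)
      have h2 : x + y + -x ∈ gr.component τ := (gr.normal τ).conj_mem _ hy x
      have he : x + y - x - y = (x + y + -x) + -y := by
        simp [sub_eq_add_neg, add_assoc]
      rw [he]; exact add_mem (hτ h2) (hτ (neg_mem hy))
  rw [gr.independent σ] at hc
  have h0 : x + y - x - y = 0 := AddSubgroup.mem_bot.mp hc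
  have h1 : x + y - x = y := sub_eq_zero.mp h0
  have : x + y = y + x := by
    calc x + y = (x + y - x) + x := by simp [sub_eq_add_neg, add_assoc]
    _ = y + x := by rw [h1]
  exact this

theorem NearRingGrading.iSupIndep_component (gr : NearRingGrading G N) :
    iSupIndep gr.component := by
  intro σ
  rw [disjoint_iff]
  have h := gr.independent σ
  have he : (⨆ τ ∈ ({σ}ᶜ : Set G), gr.component τ) = ⨆ (τ) (_ : τ ≠ σ), gr.component τ := by
    apply iSup_congr; intro τ
    simp [Set.mem_compl_iff]
  rw [← he]; exact h

theorem NearRingGrading.pairwise_comm (gr : NearRingGrading G N) {f : G → N}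
    (hf : ∀ σ, f σ ∈ gr.component σ) (s : Set G) :
    s.Pairwise fun a b => AddCommute (f a) (f b) :=
  fun a _ b _ hab => gr.addCommute_of_ne hab (hf a) (hf b)

/-- Sum over a superset when `f` vanishes outside `s`. -/
theorem noncommSum_superset_eq (gr : NearRingGrading G N) {s u : Finset G} (hsu : s ⊆ u)
    {f : G → N} (hf : ∀ σ, f σ ∈ gr.component σ) (hz : ∀ σ ∉ s, f σ = 0) :
    u.noncommSum f (gr.pairwise_comm hf u) = s.noncommSum f (gr.pairwise_comm hf s) := by
  classical
  have h1 : u = s ∪ (u \ s) := (Finset.union_sdiff_of_subset hsu).symm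
  calc u.noncommSum f (gr.pairwise_comm hf ↑u)
      = (s ∪ (u \ s)).noncommSum f (gr.pairwise_comm hf _) :=
        Finset.noncommSum_congr h1 (fun x _ => rfl) _
    _ = s.noncommSum f (gr.pairwise_comm hf ↑s)
          + (u \ s).noncommSum f (gr.pairwise_comm hf _) :=
        Finset.noncommSum_union_of_disjoint Finset.disjoint_sdiff f _
    _ = s.noncommSum f (gr.pairwise_comm hf ↑s) := by
        rw [Finset.noncommSum_eq_card_nsmul (u \ s) f _ (0 : N)
          (fun x hx => hz x (Finset.mem_sdiff.mp hx).2)]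
        simp

theorem noncommSum_neg (gr : NearRingGrading G N) (s : Finset G) {g : G → N}
    (hg : ∀ σ, g σ ∈ gr.component σ) :
    s.noncommSum (fun σ => -(g σ)) (gr.pairwise_comm (fun σ => neg_mem (hg σ)) s)
      = - s.noncommSum g (gr.pairwise_comm hg s) := by
  apply eq_neg_of_add_eq_zero_left
  have hdist := Finset.noncommSum_add_distrib (s := s) (fun σ => -(g σ)) g
    (gr.pairwise_comm (fun σ => neg_mem (hg σ)) s) (gr.pairwise_comm hg s)
    (fun a _ b _ hab => gr.addCommute_of_ne hab (hg a) (neg_mem (hg b)))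
  rw [← hdist]
  rw [Finset.noncommSum_eq_card_nsmul s _ _ (0 : N) (fun x _ => by simp)]
  simp

/-- Decomposition into homogeneous components lying in `T`, for elements of the
closure of `T ∩ (homogeneous elements)`. -/
theorem NearRingGrading.exists_decomp (gr : NearRingGrading G N) {T : Set N} (h0 : (0 : N) ∈ T)
    (hT : ∀ x y : N, x ∈ T → y ∈ T → x + y ∈ T) (hTn : ∀ x : N, x ∈ T → -x ∈ T) {x : N}
    (hx : x ∈ AddSubgroup.closure (T ∩ ⋃ σ : G, (gr.component σ : Set N))) :
    ∃ (s : Finset G) (f : G → N) (hf : ∀ σ, f σ ∈ gr.component σ),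
      (∀ σ, f σ ∈ T) ∧ (∀ σ ∉ s, f σ = 0) ∧ x = s.noncommSum f (gr.pairwise_comm hf s) := by
  classical
  induction hx using AddSubgroup.closure_induction with
  | mem z hz =>
    obtain ⟨hzT, hzH⟩ := hz
    obtain ⟨_, ⟨σ, rfl⟩, hσ⟩ := hzH
    refine ⟨{σ}, fun τ => if τ = σ then z else 0, ?_, ?_, ?_, ?_⟩
    · intro τ; by_cases h : τ = σ
      · subst h; simpa using hσ
      · simp [h, AddSubgroup.zero_mem]
    · intro τ; by_cases h : τ = σ <;> simp [h, hzT, h0]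
    · intro τ hτ; simp at hτ; simp [hτ]
    · rw [Finset.noncommSum_singleton]; simp
  | zero =>
    exact ⟨∅, fun _ => 0, fun σ => AddSubgroup.zero_mem _, fun _ => h0, fun _ _ => rfl, by simp⟩
  | add a b ha hb iha ihb =>
    obtain ⟨s, f, hf, hfT, hfz, rfl⟩ := iha
    obtain ⟨t, g, hg, hgT, hgz, rfl⟩ := ihb
    refine ⟨s ∪ t, f + g, fun σ => add_mem (hf σ) (hg σ),
      fun σ => hT _ _ (hfT σ) (hgT σ), ?_, ?_⟩
    · intro σ hσ
      simp only [Finset.mem_union, not_or] at hσ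
      simp [Pi.add_apply, hfz σ hσ.1, hgz σ hσ.2]
    · show s.noncommSum f (gr.pairwise_comm hf ↑s) + t.noncommSum g (gr.pairwise_comm hg ↑t)
          = (s ∪ t).noncommSum (f + g) _
      calc s.noncommSum f (gr.pairwise_comm hf ↑s) + t.noncommSum g (gr.pairwise_comm hg ↑t)
          = (s ∪ t).noncommSum f (gr.pairwise_comm hf _)
              + (s ∪ t).noncommSum g (gr.pairwise_comm hg _) := by
            rw [noncommSum_superset_eq gr Finset.subset_union_left hf hfz,
              noncommSum_superset_eq gr Finset.subset_union_right hg hgz]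
        _ = (s ∪ t).noncommSum (f + g) _ :=
            (Finset.noncommSum_add_distrib f g (gr.pairwise_comm hf _) (gr.pairwise_comm hg _)
              (fun a _ b _ hab => gr.addCommute_of_ne hab (hg a) (hf b))).symm
  | neg a ha iha =>
    obtain ⟨s, f, hf, hfT, hfz, rfl⟩ := iha
    refine ⟨s, fun σ => -(f σ), fun σ => neg_mem (hf σ), fun σ => hTn _ (hfT σ),
      fun σ hσ => by simp [hfz σ hσ], ?_⟩
    rw [noncommSum_neg gr s hf]

/-- Uniqueness of homogeneous decompositions. -/
theorem NearRingGrading.decomp_unique (gr : NearRingGrading G N) {s t : Finset G} {f g : G → N}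
    (hf : ∀ σ, f σ ∈ gr.component σ) (hg : ∀ σ, g σ ∈ gr.component σ)
    (hfz : ∀ σ ∉ s, f σ = 0) (hgz : ∀ σ ∉ t, g σ = 0)
    (h : s.noncommSum f (gr.pairwise_comm hf s) = t.noncommSum g (gr.pairwise_comm hg t)) :
    f = g := by
  classical
  set u := s ∪ t with hu
  have hd : ∀ σ, f σ + -(g σ) ∈ gr.component σ := fun σ => add_mem (hf σ) (neg_mem (hg σ))
  have hsum : u.noncommSum (fun σ => f σ + -(g σ)) (gr.pairwise_comm hd u) = 0 := by
    have hdist := Finset.noncommSum_add_distrib (s := u) f (fun σ => -(g σ))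
      (gr.pairwise_comm hf u) (gr.pairwise_comm (fun σ => neg_mem (hg σ)) u)
      (fun a _ b _ hab => gr.addCommute_of_ne hab (neg_mem (hg a)) (hf b))
    have e1 : u.noncommSum (fun σ => f σ + -(g σ)) (gr.pairwise_comm hd ↑u)
        = u.noncommSum f (gr.pairwise_comm hf ↑u)
          + u.noncommSum (fun σ => -(g σ)) (gr.pairwise_comm (fun σ => neg_mem (hg σ)) ↑u) :=
      hdist
    rw [e1, noncommSum_neg gr u hg,
      noncommSum_superset_eq gr Finset.subset_union_left hf hfz,
      noncommSum_superset_eq gr Finset.subset_union_right hg hgz, h]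
    simp
  have hz := AddSubgroup.eq_zero_of_noncommSum_eq_zero_of_iSupIndep u
    (fun σ => f σ + -(g σ)) (gr.pairwise_comm hd u) gr.component gr.iSupIndep_component
    (fun σ _ => hd σ) hsum
  funext σ
  by_cases hσ : σ ∈ u
  · have h' := hz σ hσ
    have h'' : f σ - g σ = 0 := by rwa [sub_eq_add_neg]
    exact eq_of_sub_eq_zero h''
  · simp only [hu, Finset.mem_union, not_or] at hσ
    rw [hfz σ hσ.1, hgz σ hσ.2]

end Aux

/-- The intersection of a monotone chain of graded weakly prime ideals
is graded weakly prime. -/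
theorem iInter_weaklyPrime_of_chain {A : Type*} [LinearOrder A] [Nonempty A]
    (gr : NearRingGrading G N) (P : A → NearRingIdeal N)
    (hwp : ∀ a : A, gr.IsGradedWeaklyPrime (P a))
    (hmono : ∀ a b : A, a ≤ b → (P a : Set N) ⊆ (P b : Set N))
    (Q : NearRingIdeal N) (hQ : (Q : Set N) = ⋂ a : A, (P a : Set N)) :
    gr.IsGradedWeaklyPrime Q := by
  have hQmem : ∀ x : N, x ∈ (Q : Set N) ↔ ∀ a : A, x ∈ (P a : Set N) := by
    intro x; rw [hQ]; exact Set.mem_iInter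
  constructor
  · -- Q is a graded ideal
    apply le_antisymm
    · intro x hx
      have hxQ : x ∈ (Q : Set N) := hx
      inhabit A
      have hxa : ∀ a : A, x ∈ AddSubgroup.closure
          (((P a : Set N)) ∩ ⋃ σ : G, (gr.component σ : Set N)) := by
        intro a
        have := (hQmem x).mp hxQ a
        rwa [show ((P a : Set N)) = ((P a).carrier : Set N) from rfl, (hwp a).1] at this
      obtain ⟨s, f, hf, hfP, hfz, hsum⟩ := gr.exists_decomp
        ((P default).carrier.zero_mem) (fun _ _ => (P default).carrier.add_mem)
        (fun _ => (P default).carrier.neg_mem) (hxa default)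
      have hfQ : ∀ σ, f σ ∈ (Q : Set N) := by
        intro σ
        rw [hQmem]
        intro a
        obtain ⟨t, g, hg, hgP, hgz, hsum'⟩ := gr.exists_decomp
          ((P a).carrier.zero_mem) (fun _ _ => (P a).carrier.add_mem)
          (fun _ => (P a).carrier.neg_mem) (hxa a)
        have hfg : f = g := gr.decomp_unique hf hg hfz hgz (by rw [← hsum, ← hsum'])
        rw [hfg]; exact hgP σ
      have : x ∈ AddSubgroup.closure ((Q : Set N) ∩ ⋃ σ : G, (gr.component σ : Set N)) := by
        rw [hsum]
        refine AddSubgroup.noncommSum_mem _ _ ?_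
        intro σ _
        exact AddSubgroup.subset_closure ⟨hfQ σ, Set.mem_iUnion.mpr ⟨σ, hf σ⟩⟩
      exact this
    · rw [AddSubgroup.closure_le]
      intro y hy
      exact hy.1
  · -- weakly prime condition
    intro I J hI hJ hne hsub
    by_contra hcon
    push_neg at hcon
    obtain ⟨hIc, hJc⟩ := hcon
    obtain ⟨x, hxI, hxQ⟩ := Set.not_subset.mp hIc
    obtain ⟨y, hyJ, hyQ⟩ := Set.not_subset.mp hJc
    obtain ⟨a, hxa⟩ : ∃ a : A, x ∉ (P a : Set N) := by
      by_contra h; push_neg at h; exact hxQ ((hQmem x).mpr h)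
    obtain ⟨b, hyb⟩ : ∃ b : A, y ∉ (P b : Set N) := by
      by_contra h; push_neg at h; exact hyQ ((hQmem y).mpr h)
    set c := min a b with hc
    have hsubc : idealProd I J ⊆ (P c : Set N) := by
      intro z hz
      exact (hQmem z).mp (hsub hz) c
    rcases (hwp c).2 I J hI hJ hne hsubc with h | h
    · exact hxa (hmono c a (min_le_left a b) (h hxI))
    · exact hyb (hmono c b (min_le_right a b) (h hyJ))
end

section
/- Let N be a G-graded near-ring, P and I graded ideals of N with I ⊆ P, and π : N → N/I the canonical epimorphism. If P is a graded weakly prime ideal of N, then π(P) is a graded weakly prime ideal of N/I. -/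
open Pointwise

variable {G : Type*} [Monoid G] {N : Type*} [NearRing N]

/-- A homomorphism of near-rings. -/
structure NearRingHom (N M : Type*) [NearRing N] [NearRing M] where
  toFun : N → M
  map_add : ∀ x y : N, toFun (x + y) = toFun x + toFun y
  map_mul : ∀ x y : N, toFun (x * y) = toFun x * toFun y

namespace QIWP

variable {M : Type*} [NearRing M]

/-- The underlying additive monoid hom of a near-ring hom. -/
def hom (π : NearRingHom N M) : N →+ M := AddMonoidHom.mk' π.toFun π.map_add

lemma hom_apply (π : NearRingHom N M) (x : N) : hom π x = π.toFun x := rfl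

/-- Pushforward of an ideal along a surjective near-ring hom. -/
def mapIdeal (π : NearRingHom N M) (hs : Function.Surjective π.toFun)
    (P : NearRingIdeal N) : NearRingIdeal M where
  carrier := P.carrier.map (hom π)
  normal := P.normal.map (hom π) hs
  mul_mem_right := by
    rintro i n hi
    rw [AddSubgroup.mem_map] at hi ⊢
    obtain ⟨p, hp, rfl⟩ := hi
    obtain ⟨m, rfl⟩ := hs n
    exact ⟨p * m, P.mul_mem_right p m hp, by
      show π.toFun (p * m) = π.toFun p * π.toFun m
      exact π.map_mul p m⟩
  quasi_left := by
    rintro m n i hi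
    rw [AddSubgroup.mem_map] at hi ⊢
    obtain ⟨j, hj, rfl⟩ := hi
    obtain ⟨a, rfl⟩ := hs m
    obtain ⟨b, rfl⟩ := hs n
    refine ⟨a * (b + j) - a * b, P.quasi_left a b j hj, ?_⟩
    simp [hom_apply, map_sub, π.map_mul, π.map_add]

lemma coe_mapIdeal (π : NearRingHom N M) (hs : Function.Surjective π.toFun)
    (P : NearRingIdeal N) : (mapIdeal π hs P : Set M) = π.toFun '' (P : Set N) := by
  exact AddSubgroup.coe_map _ _

/-- Pullback of an ideal along a near-ring hom. -/
def comapIdeal (π : NearRingHom N M) (J : NearRingIdeal M) : NearRingIdeal N where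
  carrier := J.carrier.comap (hom π)
  normal := J.normal.comap (hom π)
  mul_mem_right := by
    intro i n hi
    simp only [AddSubgroup.mem_comap, hom_apply] at hi ⊢
    rw [π.map_mul]
    exact J.mul_mem_right _ _ hi
  quasi_left := by
    intro m n i hi
    simp only [AddSubgroup.mem_comap, hom_apply] at hi ⊢
    rw [show π.toFun (m * (n + i) - m * n) = π.toFun (m * (n + i)) - π.toFun (m * n) from
      map_sub (hom π) _ _, π.map_mul, π.map_mul, π.map_add]
    exact J.quasi_left _ _ _ hi

lemma mem_comapIdeal {π : NearRingHom N M} {J : NearRingIdeal M} {x : N} :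
    x ∈ comapIdeal π J ↔ π.toFun x ∈ J := Iff.rfl

lemma zero_mul' (c : M) : (0 : M) * c = 0 := by
  have h := NearRing.right_distrib (0 : M) 0 c
  rw [add_zero] at h
  have h2 : (0 : M) * c + 0 = (0 : M) * c + (0 : M) * c := by rw [add_zero]; exact h
  exact (add_left_cancel h2).symm

end QIWP

/-- If `π : N → N/I` is the canonical epimorphism (a surjective graded
homomorphism with kernel `I`, the quotient grading being the image grading) and `P` is a
graded weakly prime ideal with `I ⊆ P`, then `π(P)` is a graded weakly prime ideal of `N/I`. -/
theorem quotient_image_weaklyPrime {N' : Type*} [NearRing N']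
    (grN : NearRingGrading G N) (grQ : NearRingGrading G N')
    (π : NearRingHom N N') (hsurj : Function.Surjective π.toFun)
    (I : NearRingIdeal N) (hI : grN.IsGradedIdeal I)
    (hker : {x : N | π.toFun x = 0} = (I : Set N))
    (hcomp : ∀ σ : G, (grQ.component σ : Set N') = π.toFun '' (grN.component σ : Set N))
    (P : NearRingIdeal N) (hIP : (I : Set N) ⊆ (P : Set N))
    (hwp : grN.IsGradedWeaklyPrime P) :
    ∃ Q : NearRingIdeal N', (Q : Set N') = π.toFun '' (P : Set N) ∧
      grQ.IsGradedWeaklyPrime Q := by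
  classical
  refine ⟨QIWP.mapIdeal π hsurj P, QIWP.coe_mapIdeal π hsurj P, ?_, ?_⟩
  · -- the image ideal is graded
    have hS' : (⋃ σ : G, (grQ.component σ : Set N')) =
        π.toFun '' (⋃ σ : G, (grN.component σ : Set N)) := by
      rw [Set.image_iUnion]
      exact Set.iUnion_congr hcomp
    show (QIWP.mapIdeal π hsurj P).carrier = _
    have hP : P.carrier = AddSubgroup.closure
        ((P : Set N) ∩ ⋃ σ : G, (grN.component σ : Set N)) := hwp.1
    apply le_antisymm
    · have heq : (QIWP.mapIdeal π hsurj P).carrier =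
          AddSubgroup.closure (π.toFun '' ((P : Set N) ∩ ⋃ σ : G, (grN.component σ : Set N))) := by
        show P.carrier.map (QIWP.hom π) = _
        rw [hP, AddMonoidHom.map_closure]
        rfl
      rw [heq]
      apply AddSubgroup.closure_mono
      rintro _ ⟨x, ⟨hxP, hxS⟩, rfl⟩
      refine ⟨⟨x, hxP, rfl⟩, ?_⟩
      rw [hS']
      exact ⟨x, hxS, rfl⟩
    · rw [AddSubgroup.closure_le]
      exact fun y hy => hy.1
  · -- weakly prime
    intro J' K' hJ' hK' hne hsub
    have comap_graded : ∀ (L' : NearRingIdeal N'), grQ.IsGradedIdeal L' →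
        grN.IsGradedIdeal (QIWP.comapIdeal π L') := by
      intro L' hL'
      show (QIWP.comapIdeal π L').carrier = _
      set C := AddSubgroup.closure
        ((QIWP.comapIdeal π L' : Set N) ∩ ⋃ σ : G, (grN.component σ : Set N)) with hC
      apply le_antisymm
      · intro x hx
        have hx' : π.toFun x ∈ L'.carrier := hx
        have hL'le : L'.carrier ≤ C.map (QIWP.hom π) := by
          have : L'.carrier = AddSubgroup.closure
              ((L' : Set N') ∩ ⋃ σ : G, (grQ.component σ : Set N')) := hL'
          rw [this, AddSubgroup.closure_le]
          rintro y ⟨hyL, hyS⟩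
          rw [Set.mem_iUnion] at hyS
          obtain ⟨σ, hyσ⟩ := hyS
          rw [hcomp σ] at hyσ
          obtain ⟨z, hz, rfl⟩ := hyσ
          refine ⟨z, AddSubgroup.subset_closure ⟨hyL, Set.mem_iUnion.mpr ⟨σ, hz⟩⟩, rfl⟩
        obtain ⟨w, hw, hwe⟩ := hL'le hx'
        have hwe' : π.toFun w = π.toFun x := hwe
        have hIle : I.carrier ≤ C := by
          have hIeq : I.carrier = AddSubgroup.closure
              ((I : Set N) ∩ ⋃ σ : G, (grN.component σ : Set N)) := hI
          rw [hIeq, AddSubgroup.closure_le]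
          rintro z ⟨hzI, hzS⟩
          refine AddSubgroup.subset_closure ⟨?_, hzS⟩
          show π.toFun z ∈ L'
          have h2 : z ∈ {x : N | π.toFun x = 0} := by rw [hker]; exact hzI
          have h3 : π.toFun z = 0 := h2
          rw [h3]; exact L'.carrier.zero_mem
        have hxw : x - w ∈ I.carrier := by
          have h2 : x - w ∈ {x : N | π.toFun x = 0} := by
            show π.toFun (x - w) = 0
            have := map_sub (QIWP.hom π) x w
            simp only [QIWP.hom_apply] at this
            rw [this, hwe', sub_self]
          rw [hker] at h2
          exact h2
        have : x = (x - w) + w := (sub_add_cancel x w).symm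
        rw [this]
        exact C.add_mem (hIle hxw) hw
      · rw [AddSubgroup.closure_le]
        exact fun y hy => hy.1
    set J := QIWP.comapIdeal π J' with hJdef
    set K := QIWP.comapIdeal π K' with hKdef
    have h0 : (0 : N') ∈ idealProd J' K' := by
      rw [idealProd, Set.mem_mul]
      exact ⟨0, J'.carrier.zero_mem, 0, K'.carrier.zero_mem, QIWP.zero_mul' 0⟩
    have hex : ∃ a ∈ idealProd J' K', a ≠ 0 := by
      by_contra h
      push_neg at h
      exact hne (Set.eq_singleton_iff_unique_mem.mpr ⟨h0, h⟩)
    obtain ⟨a, ha, hane⟩ := hex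
    rw [idealProd, Set.mem_mul] at ha
    obtain ⟨j', hj', k', hk', rfl⟩ := ha
    obtain ⟨j, rfl⟩ := hsurj j'
    obtain ⟨k, rfl⟩ := hsurj k'
    have hJK : idealProd J K ⊆ (P : Set N) := by
      rintro b hb
      rw [idealProd, Set.mem_mul] at hb
      obtain ⟨x, hx, y, hy, rfl⟩ := hb
      have hmem : π.toFun (x * y) ∈ π.toFun '' (P : Set N) := by
        rw [π.map_mul]
        refine (QIWP.coe_mapIdeal π hsurj P) ▸ hsub ?_
        rw [idealProd, Set.mem_mul]
        exact ⟨π.toFun x, hx, π.toFun y, hy, rfl⟩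
      obtain ⟨p, hp, hpe⟩ := hmem
      have hsub0 : x * y - p ∈ (I : Set N) := by
        rw [← hker]
        show π.toFun (x * y - p) = 0
        have := map_sub (QIWP.hom π) (x * y) p
        simp only [QIWP.hom_apply] at this
        rw [this, hpe, sub_self]
      have : x * y = (x * y - p) + p := (sub_add_cancel (x*y) p).symm
      rw [this]
      exact P.carrier.add_mem (hIP hsub0) hp
    have hjkmem : j * k ∈ idealProd J K := by
      rw [idealProd, Set.mem_mul]
      exact ⟨j, hj', k, hk', rfl⟩
    have hJKne : idealProd J K ≠ {0} := by
      intro h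
      rw [h] at hjkmem
      have : j * k = 0 := hjkmem
      apply hane
      rw [← π.map_mul, this]
      exact map_zero (QIWP.hom π)
    rcases hwp.2 J K (comap_graded J' hJ') (comap_graded K' hK') hJKne hJK with h | h
    · left
      rw [QIWP.coe_mapIdeal]
      rintro y hy
      obtain ⟨x, rfl⟩ := hsurj y
      exact ⟨x, h hy, rfl⟩
    · right
      rw [QIWP.coe_mapIdeal]
      rintro y hy
      obtain ⟨x, rfl⟩ := hsurj y
      exact ⟨x, h hy, rfl⟩
end

section
/- Let N be a G-graded near-ring and P a graded weakly prime ideal of N with P² = {0}. If I is a graded ideal of N with I² ⊆ P, then I² = {0}. -/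
open Pointwise

variable {G : Type*} [Monoid G] {N : Type*} [NearRing N]

/-- If `P` is graded weakly prime with `P² = {0}` and `I` is a graded ideal
with `I² ⊆ P`, then `I² = {0}`. -/
theorem sq_eq_zero_of_sq_subset_weaklyPrime (gr : NearRingGrading G N) (P : NearRingIdeal N)
    (hwp : gr.IsGradedWeaklyPrime P) (hPsq : idealProd P P = {0})
    (I : NearRingIdeal N) (hI : gr.IsGradedIdeal I)
    (hsub : idealProd I I ⊆ (P : Set N)) :
    idealProd I I = {0} := by
  by_contra hne
  have hIP : (I : Set N) ⊆ (P : Set N) := by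
    rcases hwp.2 I I hI hI hne hsub with h | h <;> exact h
  apply hne
  apply Set.eq_singleton_iff_unique_mem.mpr
  constructor
  · have h0 : (0:N) ∈ I := I.carrier.zero_mem
    have hz : (0:N) * 0 = 0 := by
      have h := NearRing.right_distrib (0:N) 0 0
      rw [add_zero] at h
      exact (right_eq_add.mp h)
    exact ⟨0, h0, 0, h0, hz⟩
  · intro x hx
    have hxP : x ∈ idealProd P P := by
      rcases hx with ⟨a, ha, b, hb, rfl⟩
      exact ⟨a, hIP ha, b, hIP hb, rfl⟩
    rw [hPsq] at hxP
    exact hxP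
end

section
/- Let N and M be G-graded near-rings and P a graded ideal of N. Then P is a graded almost prime ideal of N if and only if P × M is a graded almost prime ideal of the product graded near-ring N × M. -/
open Pointwise

variable {G : Type*} [Monoid G] {N : Type*} [NearRing N]

section ProductNearRing

variable {N' M : Type*}

private theorem NearRing.zero_mul' [NearRing N'] (n : N') : (0 : N') * n = 0 := by
  have h := NearRing.right_distrib (0 : N') 0 n
  rw [add_zero] at h
  exact (left_eq_add.mp h)

instance [NearRing N'] [NearRing M] : NearRing (N' × M) :=
  { (inferInstance : AddGroup (N' × M)), (inferInstance : Semigroup (N' × M)) with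
    right_distrib := fun a b c =>
      Prod.ext (NearRing.right_distrib a.1 b.1 c.1) (NearRing.right_distrib a.2 b.2 c.2) }

/-- The product ideal `I × J` of the product near-ring. -/
def NearRingIdeal.prod [NearRing N'] [NearRing M] (I : NearRingIdeal N') (J : NearRingIdeal M) :
    NearRingIdeal (N' × M) where
  carrier := I.carrier.prod J.carrier
  normal := ⟨fun n hn g => ⟨I.normal.conj_mem n.1 hn.1 g.1, J.normal.conj_mem n.2 hn.2 g.2⟩⟩
  mul_mem_right := fun i n hi => ⟨I.mul_mem_right i.1 n.1 hi.1, J.mul_mem_right i.2 n.2 hi.2⟩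
  quasi_left := fun m n i hi => ⟨I.quasi_left m.1 n.1 i.1 hi.1, J.quasi_left m.2 n.2 i.2 hi.2⟩

/-- The whole near-ring, as an ideal. -/
def topIdeal (M : Type*) [NearRing M] : NearRingIdeal M where
  carrier := ⊤
  normal := ⟨fun _ _ _ => trivial⟩
  mul_mem_right := fun _ _ _ => trivial
  quasi_left := fun _ _ _ _ => trivial

/-- The zero ideal. -/
def botIdeal (M : Type*) [NearRing M] : NearRingIdeal M where
  carrier := ⊥
  normal := ⟨fun n hn g => by
    simp only [AddSubgroup.mem_bot] at hn ⊢
    simp [hn]⟩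
  mul_mem_right := fun i n hi => by
    simp only [AddSubgroup.mem_bot] at hi ⊢
    simp [hi, NearRing.zero_mul']
  quasi_left := fun m n i hi => by
    simp only [AddSubgroup.mem_bot] at hi ⊢
    simp [hi]

end ProductNearRing


section AuxProof

variable {M : Type*} [NearRing M]

/-- Projection of an ideal of `N × M` to `N`. -/
def projIdeal (A : NearRingIdeal (N × M)) : NearRingIdeal N where
  carrier := A.carrier.map (AddMonoidHom.fst N M)
  normal := ⟨by
    rintro n hn g
    rw [AddSubgroup.mem_map] at hn ⊢
    obtain ⟨p, hp, rfl⟩ := hn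
    exact ⟨(g, 0) + p + -(g, 0), A.normal.conj_mem p hp (g, 0), rfl⟩⟩
  mul_mem_right := by
    intro i n hi
    rw [AddSubgroup.mem_map] at hi ⊢
    obtain ⟨p, hp, rfl⟩ := hi
    exact ⟨p * (n, 0), A.mul_mem_right p (n, 0) hp, rfl⟩
  quasi_left := by
    intro m n i hi
    rw [AddSubgroup.mem_map] at hi ⊢
    obtain ⟨p, hp, rfl⟩ := hi
    exact ⟨(m, 0) * ((n, 0) + p) - (m, 0) * (n, 0), A.quasi_left (m, 0) (n, 0) p hp, rfl⟩

lemma mem_projIdeal {A : NearRingIdeal (N × M)} {x : N} :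
    x ∈ (projIdeal A : Set N) ↔ ∃ y : M, (x, y) ∈ (A : Set (N × M)) := by
  constructor
  · intro hx
    obtain ⟨p, hp, rfl⟩ := AddSubgroup.mem_map.mp hx
    exact ⟨p.2, hp⟩
  · rintro ⟨y, hy⟩
    exact AddSubgroup.mem_map.mpr ⟨(x, y), hy, rfl⟩

lemma mem_prodTop {I : NearRingIdeal N} {p : N × M} :
    p ∈ (I.prod (topIdeal M) : Set (N × M)) ↔ p.1 ∈ (I : Set N) := by
  constructor
  · intro hp
    exact hp.1
  · intro hp
    exact ⟨hp, trivial⟩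

variable {grN : NearRingGrading G N} {grM : NearRingGrading G M}
  {grNM : NearRingGrading G (N × M)}

lemma projIdeal_graded
    (hcomp : ∀ σ : G, (grNM.component σ : Set (N × M)) =
      (grN.component σ : Set N) ×ˢ (grM.component σ : Set M))
    {A : NearRingIdeal (N × M)} (hA : grNM.IsGradedIdeal A) :
    grN.IsGradedIdeal (projIdeal A) := by
  unfold NearRingGrading.IsGradedIdeal at hA ⊢
  apply le_antisymm
  · show (A.carrier.map (AddMonoidHom.fst N M)) ≤ _
    rw [hA, AddMonoidHom.map_closure]
    apply AddSubgroup.closure_mono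
    rintro x ⟨p, ⟨hpA, hph⟩, rfl⟩
    constructor
    · exact mem_projIdeal.mpr ⟨p.2, hpA⟩
    · obtain ⟨s, ⟨σ, rfl⟩, hs⟩ := hph
      refine Set.mem_iUnion.mpr ⟨σ, ?_⟩
      have hs' : p ∈ (grNM.component σ : Set (N × M)) := hs
      rw [hcomp σ] at hs'
      exact hs'.1
  · rw [AddSubgroup.closure_le]
    intro x hx
    exact hx.1

lemma prodTop_graded
    (hcomp : ∀ σ : G, (grNM.component σ : Set (N × M)) =
      (grN.component σ : Set N) ×ˢ (grM.component σ : Set M))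
    {I : NearRingIdeal N} (hI : grN.IsGradedIdeal I) :
    grNM.IsGradedIdeal (I.prod (topIdeal M)) := by
  unfold NearRingGrading.IsGradedIdeal at hI ⊢
  apply le_antisymm
  · rintro ⟨x, y⟩ ⟨hx, -⟩
    have hxy : ((x, y) : N × M) = (x, 0) + (0, y) := by simp
    rw [hxy]
    apply AddSubgroup.add_mem
    · -- (x, 0)
      have hx' : x ∈ AddSubgroup.closure ((I : Set N) ∩ ⋃ σ : G, (grN.component σ : Set N)) :=
        hI ▸ hx
      have : ((x, 0) : N × M) ∈
          (AddSubgroup.closure ((I : Set N) ∩ ⋃ σ : G, (grN.component σ : Set N))).map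
            (AddMonoidHom.inl N M) := AddSubgroup.mem_map.mpr ⟨x, hx', rfl⟩
      rw [AddMonoidHom.map_closure] at this
      refine AddSubgroup.closure_mono ?_ this
      rintro p ⟨t, ⟨htI, hth⟩, rfl⟩
      obtain ⟨σ, hs⟩ := Set.mem_iUnion.mp hth
      refine ⟨mem_prodTop.mpr htI, Set.mem_iUnion.mpr ⟨σ, ?_⟩⟩
      rw [hcomp σ]
      exact ⟨hs, (grM.component σ).zero_mem⟩
    · -- (0, y)
      have hy' : y ∈ AddSubgroup.closure (⋃ σ : G, (grM.component σ : Set M)) := by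
        rw [AddSubgroup.closure_iUnion]
        simp only [AddSubgroup.closure_eq]
        rw [grM.span_top]
        trivial
      have : ((0, y) : N × M) ∈
          (AddSubgroup.closure (⋃ σ : G, (grM.component σ : Set M))).map
            (AddMonoidHom.inr N M) := AddSubgroup.mem_map.mpr ⟨y, hy', rfl⟩
      rw [AddMonoidHom.map_closure] at this
      refine AddSubgroup.closure_mono ?_ this
      rintro p ⟨t, hth, rfl⟩
      obtain ⟨σ, hs⟩ := Set.mem_iUnion.mp hth
      refine ⟨mem_prodTop.mpr I.carrier.zero_mem, Set.mem_iUnion.mpr ⟨σ, ?_⟩⟩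
      rw [hcomp σ]
      exact ⟨(grN.component σ).zero_mem, hs⟩
  · rw [AddSubgroup.closure_le]
    intro x hx
    exact hx.1

end AuxProof

/-- `P` is a graded almost prime ideal of `N` iff `P × M` is a graded
almost prime ideal of the product graded near-ring `N × M`. -/
theorem almostPrime_iff_prod_almostPrime {M : Type*} [NearRing M]
    (grN : NearRingGrading G N) (grM : NearRingGrading G M)
    (grNM : NearRingGrading G (N × M))
    (hcomp : ∀ σ : G, (grNM.component σ : Set (N × M)) =
      (grN.component σ : Set N) ×ˢ (grM.component σ : Set M))
    (P : NearRingIdeal N) (hP : grN.IsGradedIdeal P) :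
    grN.IsGradedAlmostPrime P ↔ grNM.IsGradedAlmostPrime (P.prod (topIdeal M)) := by
  constructor
  · rintro ⟨hPg, hprime⟩
    refine ⟨prodTop_graded hcomp hPg, ?_⟩
    intro A B hA hB hAB hnot
    have hIJ : idealProd (projIdeal A) (projIdeal B) ⊆ (P : Set N) := by
      rintro x hx
      rw [idealProd, Set.mem_mul] at hx
      obtain ⟨a, ha, b, hb, rfl⟩ := hx
      obtain ⟨a₂, ha₂⟩ := mem_projIdeal.mp ha
      obtain ⟨b₂, hb₂⟩ := mem_projIdeal.mp hb
      have : ((a, a₂) : N × M) * (b, b₂) ∈ idealProd A B :=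
        Set.mul_mem_mul ha₂ hb₂
      exact (mem_prodTop.mp (hAB this))
    have hnsq : ¬ idealProd (projIdeal A) (projIdeal B) ⊆ idealProd P P := by
      intro hsub
      apply hnot
      rintro x hx
      rw [idealProd, Set.mem_mul] at hx
      obtain ⟨a, ha, b, hb, rfl⟩ := hx
      have h1 : a.1 ∈ (projIdeal A : Set N) := mem_projIdeal.mpr ⟨a.2, ha⟩
      have h2 : b.1 ∈ (projIdeal B : Set N) := mem_projIdeal.mpr ⟨b.2, hb⟩
      have hm : a.1 * b.1 ∈ idealProd P P := hsub (Set.mul_mem_mul h1 h2)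
      rw [idealProd, Set.mem_mul] at hm
      obtain ⟨p, hp, q, hq, hpq⟩ := hm
      have : ((p, a.2) : N × M) * (q, b.2) = a * b := by
        ext <;> simp [hpq]
      rw [idealProd]
      rw [← this]
      exact Set.mul_mem_mul (mem_prodTop.mpr hp) (mem_prodTop.mpr hq)
    rcases hprime (projIdeal A) (projIdeal B) (projIdeal_graded hcomp hA)
        (projIdeal_graded hcomp hB) hIJ hnsq with h | h
    · left
      intro p hp
      exact mem_prodTop.mpr (h (mem_projIdeal.mpr ⟨p.2, hp⟩))
    · right
      intro p hp
      exact mem_prodTop.mpr (h (mem_projIdeal.mpr ⟨p.2, hp⟩))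
  · rintro ⟨-, hprime⟩
    refine ⟨hP, ?_⟩
    intro I J hI hJ hIJ hnsq
    have hAB : idealProd (I.prod (topIdeal M)) (J.prod (topIdeal M)) ⊆
        ((P.prod (topIdeal M)) : Set (N × M)) := by
      rintro x hx
      rw [idealProd, Set.mem_mul] at hx
      obtain ⟨a, ha, b, hb, rfl⟩ := hx
      exact mem_prodTop.mpr (hIJ (Set.mul_mem_mul (mem_prodTop.mp ha) (mem_prodTop.mp hb)))
    have hnot : ¬ idealProd (I.prod (topIdeal M)) (J.prod (topIdeal M)) ⊆
        idealProd (P.prod (topIdeal M)) (P.prod (topIdeal M)) := by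
      intro hsub
      apply hnsq
      intro x hx
      rw [idealProd, Set.mem_mul] at hx
      obtain ⟨a, ha, b, hb, rfl⟩ := hx
      have : ((a, (0 : M)) : N × M) * (b, 0) ∈
          idealProd (I.prod (topIdeal M)) (J.prod (topIdeal M)) :=
        Set.mul_mem_mul (mem_prodTop.mpr ha) (mem_prodTop.mpr hb)
      have hm := hsub this
      rw [idealProd, Set.mem_mul] at hm
      obtain ⟨p, hp, q, hq, hpq⟩ := hm
      have h1 : p.1 * q.1 = a * b := congrArg Prod.fst hpq
      rw [idealProd, ← h1]
      exact Set.mul_mem_mul (mem_prodTop.mp hp) (mem_prodTop.mp hq)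
    rcases hprime (I.prod (topIdeal M)) (J.prod (topIdeal M)) (prodTop_graded hcomp hI)
        (prodTop_graded hcomp hJ) hAB hnot with h | h
    · left
      intro i hi
      have : ((i, 0) : N × M) ∈ (I.prod (topIdeal M) : Set (N × M)) := mem_prodTop.mpr hi
      exact mem_prodTop.mp (h this)
    · right
      intro j hj
      have : ((j, 0) : N × M) ∈ (J.prod (topIdeal M) : Set (N × M)) := mem_prodTop.mpr hj
      exact mem_prodTop.mp (h this)
end
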